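/- For every permutation π ∈ S_n and every 0 ≤ i ≤ n, inv(π·c_n^i) − inv(π) = i(n+1) − 2·Σ_{j=1}^i π(j), where c_n is the n-cycle (1,2,…,n). -/

import Mathlib

open Finset

def inversions {n : ℕ} (π : Equiv.Perm (Fin n)) : ℕ :=
  (Finset.univ.filter (fun p : Fin n × Fin n => p.1 < p.2 ∧ π p.2 < π p.1)).card

def winv {n : ℕ} (π : Equiv.Perm (Fin n)) : ℤ :=
  ∑ p ∈ Finset.univ.filter (fun p : Fin n × Fin n => p.1 < p.2 ∧ π p.2 < π p.1),
    ((π p.1 : ℤ) - (π p.2 : ℤ))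

def cwinv {n : ℕ} (π : Equiv.Perm (Fin n)) : ℤ :=
  n * inversions π - 2 * winv π

private def Tset {n : ℕ} (σ : Equiv.Perm (Fin (n+1))) : Finset (Fin (n+1) × Fin (n+1)) :=
  Finset.univ.filter (fun p : Fin (n+1) × Fin (n+1) => 0 < p.1 ∧ p.1 < p.2 ∧ σ p.2 < σ p.1)

private lemma cardW {n : ℕ} (σ : Equiv.Perm (Fin (n+1))) :
    (Finset.univ.filter fun q : Fin (n+1) => σ q < σ 0).card = σ 0 := by
  have h1 : (Finset.univ.filter fun q : Fin (n+1) => σ q < σ 0)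
      = (Finset.univ.filter fun w : Fin (n+1) => w < σ 0).map σ.symm.toEmbedding := by
    ext q
    simp [Equiv.symm_apply_eq]
  rw [h1, Finset.card_map, Finset.filter_gt_eq_Iio, Fin.card_Iio]

private lemma cardU {n : ℕ} (σ : Equiv.Perm (Fin (n+1))) :
    (Finset.univ.filter fun q : Fin (n+1) => σ 0 < σ q).card = n - σ 0 := by
  have h1 : (Finset.univ.filter fun q : Fin (n+1) => σ 0 < σ q)
      = (Finset.univ.filter fun w : Fin (n+1) => σ 0 < w).map σ.symm.toEmbedding := by
    ext q
    simp [Equiv.symm_apply_eq]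
  rw [h1, Finset.card_map, Finset.filter_lt_eq_Ioi, Fin.card_Ioi]
  simp

private lemma claim2 {n : ℕ} (σ : Equiv.Perm (Fin (n+1))) :
    inversions σ = (Tset σ).card
      + (Finset.univ.filter fun q : Fin (n+1) => σ q < σ 0).card := by
  have h2 : (Finset.univ.filter (fun p : Fin (n+1) × Fin (n+1) =>
        p.1 = 0 ∧ (0 < p.2 ∧ σ p.2 < σ 0))).card
      = (Finset.univ.filter fun q : Fin (n+1) => σ q < σ 0).card := by
    refine Finset.card_nbij' (fun p => p.2) (fun q => (0, q)) ?_ ?_ ?_ ?_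
    · rintro p hp
      simp only [Finset.mem_coe, Finset.mem_filter, Finset.mem_univ, true_and] at hp ⊢
      exact hp.2.2
    · rintro q hq
      simp only [Finset.mem_coe, Finset.mem_filter, Finset.mem_univ, true_and] at hq ⊢
      refine ⟨Fin.pos_iff_ne_zero.mpr ?_, hq⟩
      rintro rfl
      exact absurd hq (lt_irrefl _)
    · rintro p hp
      simp only [Finset.mem_coe, Finset.mem_filter, Finset.mem_univ, true_and] at hp
      exact Prod.ext hp.1.symm rfl
    · intro q hq
      rfl
  have hdisj : Disjoint
      (Finset.univ.filter (fun p : Fin (n+1) × Fin (n+1) => 0 < p.1 ∧ p.1 < p.2 ∧ σ p.2 < σ p.1))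
      (Finset.univ.filter (fun p : Fin (n+1) × Fin (n+1) => p.1 = 0 ∧ (0 < p.2 ∧ σ p.2 < σ 0))) := by
    simp only [Finset.disjoint_left, Finset.mem_filter, Finset.mem_univ, true_and]
    rintro p ⟨hp, _, _⟩ ⟨h0, _, _⟩
    rw [h0] at hp
    exact absurd hp (lt_irrefl _)
  have hsplit : Finset.univ.filter (fun p : Fin (n+1) × Fin (n+1) => p.1 < p.2 ∧ σ p.2 < σ p.1)
      = Finset.univ.filter (fun p : Fin (n+1) × Fin (n+1) =>
          (0 < p.1 ∧ p.1 < p.2 ∧ σ p.2 < σ p.1) ∨ (p.1 = 0 ∧ (0 < p.2 ∧ σ p.2 < σ 0))) := by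
    apply Finset.filter_congr
    intro p _
    constructor
    · rintro ⟨h1, h2⟩
      rcases eq_or_ne p.1 0 with h | h
      · exact Or.inr ⟨h, h ▸ h1, h ▸ h2⟩
      · exact Or.inl ⟨Fin.pos_iff_ne_zero.mpr h, h1, h2⟩
    · rintro (⟨_, h1, h2⟩ | ⟨h0, h1, h2⟩)
      · exact ⟨h1, h2⟩
      · exact ⟨h0 ▸ h1, h0 ▸ h2⟩
  rw [inversions, hsplit, Finset.filter_or, Finset.card_union_of_disjoint hdisj, h2, Tset]

private lemma claim1 {n : ℕ} (σ : Equiv.Perm (Fin (n+1))) :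
    inversions (σ * finRotate (n+1)) = (Tset σ).card
      + (Finset.univ.filter fun q : Fin (n+1) => σ 0 < σ q).card := by
  have hA1 : (Finset.univ.filter (fun p : Fin (n+1) × Fin (n+1) =>
        p.1 < p.2 ∧ p.2 ≠ Fin.last n ∧ σ (p.2 + 1) < σ (p.1 + 1))).card = (Tset σ).card := by
    refine Finset.card_nbij' (fun p : Fin (n+1) × Fin (n+1) => (p.1 + 1, p.2 + 1))
      (fun p : Fin (n+1) × Fin (n+1) => (p.1 - 1, p.2 - 1)) ?_ ?_ ?_ ?_
    · rintro ⟨a, b⟩ hp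
      simp only [Finset.mem_coe, Finset.mem_filter, Finset.mem_univ, true_and, Tset] at hp ⊢
      obtain ⟨h1, h2, h3⟩ := hp
      have hb : (b : ℕ) ≠ n := fun h => h2 (Fin.ext h)
      have ha : (a : ℕ) < (b : ℕ) := h1
      have hbn : (b : ℕ) ≤ n := Fin.is_le b
      have hva : ((a + 1 : Fin (n+1)) : ℕ) = (a : ℕ) + 1 := by
        rw [Fin.val_add_one, if_neg (fun h => (by omega : (a:ℕ) ≠ n) (by rw [h]; rfl))]
      have hvb : ((b + 1 : Fin (n+1)) : ℕ) = (b : ℕ) + 1 := by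
        rw [Fin.val_add_one, if_neg (fun h => hb (by rw [h]; rfl))]
      refine ⟨?_, ?_, h3⟩
      · rw [Fin.lt_def]; simp only [Fin.val_zero]; omega
      · rw [Fin.lt_def]; omega
    · rintro ⟨a, b⟩ hp
      simp only [Finset.mem_coe, Finset.mem_filter, Finset.mem_univ, true_and, Tset] at hp ⊢
      obtain ⟨h1, h2, h3⟩ := hp
      have ha0 : (a : ℕ) ≠ 0 := by
        intro h; rw [Fin.lt_def] at h1; simp [h] at h1
      have hb0 : (b : ℕ) ≠ 0 := by
        rw [Fin.lt_def] at h1 h2; omega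
      have hab : (a : ℕ) < b := h2
      have hbn : (b : ℕ) ≤ n := Fin.is_le b
      have hva : ((a - 1 : Fin (n+1)) : ℕ) = (a : ℕ) - 1 := by
        rw [Fin.coe_sub_one, if_neg (fun h => ha0 (by rw [h]; rfl))]
      have hvb : ((b - 1 : Fin (n+1)) : ℕ) = (b : ℕ) - 1 := by
        rw [Fin.coe_sub_one, if_neg (fun h => hb0 (by rw [h]; rfl))]
      refine ⟨?_, ?_, ?_⟩
      · rw [Fin.lt_def]; omega
      · intro h
        have := congrArg Fin.val h
        rw [hvb, Fin.val_last] at this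
        omega
      · rw [sub_add_cancel, sub_add_cancel]; exact h3
    · rintro ⟨a, b⟩ _
      simp [add_sub_cancel_right]
    · rintro ⟨a, b⟩ _
      simp [sub_add_cancel]
  have hA2 : (Finset.univ.filter (fun p : Fin (n+1) × Fin (n+1) =>
        p.1 < p.2 ∧ p.2 = Fin.last n ∧ σ (p.2 + 1) < σ (p.1 + 1))).card
      = (Finset.univ.filter fun q : Fin (n+1) => σ 0 < σ q).card := by
    refine Finset.card_nbij' (fun p : Fin (n+1) × Fin (n+1) => p.1 + 1)
      (fun q : Fin (n+1) => (q - 1, Fin.last n)) ?_ ?_ ?_ ?_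
    · rintro ⟨a, b⟩ hp
      simp only [Finset.mem_coe, Finset.mem_filter, Finset.mem_univ, true_and] at hp ⊢
      obtain ⟨h1, h2, h3⟩ := hp
      rw [h2, Fin.last_add_one] at h3
      exact h3
    · rintro q hq
      simp only [Finset.mem_coe, Finset.mem_filter, Finset.mem_univ, true_and] at hq ⊢
      have hq0 : (q : ℕ) ≠ 0 := by
        rintro h
        rw [(Fin.ext h : q = 0)] at hq
        exact absurd hq (lt_irrefl _)
      have hqn : (q : ℕ) ≤ n := Fin.is_le q
      have hv : ((q - 1 : Fin (n+1)) : ℕ) = (q : ℕ) - 1 := by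
        rw [Fin.coe_sub_one, if_neg (fun h => hq0 (by rw [h]; rfl))]
      refine ⟨?_, ?_⟩
      · rw [Fin.lt_def, Fin.val_last]; omega
      · rw [Fin.last_add_one, sub_add_cancel]
        exact hq
    · rintro ⟨a, b⟩ hp
      simp only [Finset.mem_coe, Finset.mem_filter, Finset.mem_univ, true_and] at hp
      show (a + 1 - 1, Fin.last n) = (a, b)
      rw [add_sub_cancel_right]
      exact Prod.ext rfl hp.2.1.symm
    · intro q _
      simp [sub_add_cancel]
  have hdisj : Disjoint
      (Finset.univ.filter (fun p : Fin (n+1) × Fin (n+1) =>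
        p.1 < p.2 ∧ p.2 ≠ Fin.last n ∧ σ (p.2 + 1) < σ (p.1 + 1)))
      (Finset.univ.filter (fun p : Fin (n+1) × Fin (n+1) =>
        p.1 < p.2 ∧ p.2 = Fin.last n ∧ σ (p.2 + 1) < σ (p.1 + 1))) := by
    simp only [Finset.disjoint_left, Finset.mem_filter, Finset.mem_univ, true_and]
    rintro p ⟨_, hp, _⟩ ⟨_, h0, _⟩
    exact hp h0
  have hsplit : Finset.univ.filter (fun p : Fin (n+1) × Fin (n+1) =>
        p.1 < p.2 ∧ (σ * finRotate (n+1)) p.2 < (σ * finRotate (n+1)) p.1)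
      = Finset.univ.filter (fun p : Fin (n+1) × Fin (n+1) =>
          (p.1 < p.2 ∧ p.2 ≠ Fin.last n ∧ σ (p.2 + 1) < σ (p.1 + 1)) ∨
          (p.1 < p.2 ∧ p.2 = Fin.last n ∧ σ (p.2 + 1) < σ (p.1 + 1))) := by
    apply Finset.filter_congr
    intro p _
    simp only [Equiv.Perm.mul_apply, finRotate_succ_apply]
    constructor
    · rintro ⟨h1, h2⟩
      rcases eq_or_ne p.2 (Fin.last n) with h | h
      · exact Or.inr ⟨h1, h, h2⟩
      · exact Or.inl ⟨h1, h, h2⟩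
    · rintro (⟨h1, _, h2⟩ | ⟨h1, _, h2⟩) <;> exact ⟨h1, h2⟩
  rw [inversions, hsplit, Finset.filter_or, Finset.card_union_of_disjoint hdisj, hA1, hA2]

private lemma key {n : ℕ} (σ : Equiv.Perm (Fin (n+1))) :
    (inversions (σ * finRotate (n+1)) : ℤ) - inversions σ
      = ((n : ℤ) + 1 + 1) - 2 * ((σ 0 : ℤ) + 1) := by
  rw [claim1 σ, claim2 σ, cardU σ, cardW σ]
  have h0 : (σ 0 : ℕ) ≤ n := Fin.is_le _
  push_cast [Nat.cast_sub h0]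
  ring

private lemma rotpow (m i : ℕ) (h : i < m + 1) :
    ((finRotate (m+1)) ^ i) 0 = ⟨i, h⟩ := by
  induction i with
  | zero => rfl
  | succ i ih =>
    have hne : (⟨i, by omega⟩ : Fin (m+1)) ≠ Fin.last m := by
      intro hlast
      have := congrArg Fin.val hlast
      simp only [Fin.val_last] at this
      omega
    rw [pow_succ', Equiv.Perm.mul_apply, ih (by omega), finRotate_succ_apply]
    apply Fin.ext
    rw [Fin.val_add_one, if_neg hne]

theorem inv_rotate_pow {n : ℕ} (π : Equiv.Perm (Fin n)) (i : ℕ) (hi : i ≤ n) :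
    (inversions (π * (finRotate n) ^ i) : ℤ) - inversions π
      = i * (n + 1)
        - 2 * ∑ j ∈ Finset.univ.filter (fun j : Fin n => (j : ℕ) < i), ((π j : ℤ) + 1) := by
  induction i with
  | zero => simp
  | succ i ih =>
    have hin : i < n := hi
    have ihh := ih (le_of_lt hin)
    obtain ⟨m, rfl⟩ : ∃ m, n = m + 1 := ⟨n - 1, by omega⟩
    have hkey := key (π * finRotate (m+1) ^ i)
    have h0 : (π * finRotate (m+1) ^ i) 0 = π ⟨i, hin⟩ := by
      rw [Equiv.Perm.mul_apply, rotpow m i hin]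
    rw [h0] at hkey
    rw [pow_succ, ← mul_assoc]
    have hsum : Finset.univ.filter (fun j : Fin (m+1) => (j : ℕ) < i + 1)
        = insert (⟨i, hin⟩ : Fin (m+1)) (Finset.univ.filter fun j : Fin (m+1) => (j : ℕ) < i) := by
      ext j
      simp only [Finset.mem_filter, Finset.mem_univ, true_and, Finset.mem_insert, Fin.ext_iff]
      omega
    rw [hsum, Finset.sum_insert (by simp)]
    push_cast at *
    linarith
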